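/- For every natural number M with 3 ≤ M ≤ 7, letting d := √((M − 2)/(2(M − 1))), the inequality 1/M − (16(M − 1)/(e·M²))·sinh(d) + (8·√(2(M − 2)(M − 1))/(e·M²))·cosh(d) > 1/(2·√(M − 1)) holds; moreover, it fails for M = 8. -/

import Mathlib

/-- The absolute Wigner volume `V_{2D}(|D₂^M⟩; ℂ)` of the two-excitation Dicke state
along the diagonal two-dimensional phase-space slice, as computed in the paper. -/
noncomputable def dickeVol (M : ℕ) : ℝ :=
  1 / (M : ℝ)
    - (16 * ((M : ℝ) - 1) / (Real.exp 1 * (M : ℝ) ^ 2)) *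
        Real.sinh (Real.sqrt (((M : ℝ) - 2) / (2 * ((M : ℝ) - 1))))
    + (8 * Real.sqrt (2 * ((M : ℝ) - 2) * ((M : ℝ) - 1)) / (Real.exp 1 * (M : ℝ) ^ 2)) *
        Real.cosh (Real.sqrt (((M : ℝ) - 2) / (2 * ((M : ℝ) - 1))))

lemma aux3 : dickeVol 3 > 1 / (2 * Real.sqrt (((3:ℕ) : ℝ) - 1)) := by
  have hd1 : (1/2:ℝ) ≤ Real.sqrt (1/4:ℝ) := (Real.le_sqrt (by norm_num) (by norm_num)).2 (by norm_num)
  have hd2 : Real.sqrt (1/4:ℝ) ≤ (1/2:ℝ) := Real.sqrt_le_iff.2 ⟨by norm_num, by norm_num⟩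
  have hs1 : (2/1:ℝ) ≤ Real.sqrt (4:ℝ) := (Real.le_sqrt (by norm_num) (by norm_num)).2 (by norm_num)
  have hs2 : Real.sqrt (4:ℝ) ≤ (2/1:ℝ) := Real.sqrt_le_iff.2 ⟨by norm_num, by norm_num⟩
  set d := Real.sqrt (1/4:ℝ) with hdd
  have hE1 : (16487211/10000000:ℝ) ≤ Real.exp d := by
    calc (16487211/10000000:ℝ) ≤ ∑ i ∈ Finset.range 8, (1/2:ℝ) ^ i / i.factorial := by
          norm_num [Finset.sum_range_succ, Nat.factorial]
      _ ≤ Real.exp (1/2:ℝ) := Real.sum_le_exp_of_nonneg (by norm_num) 8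
      _ ≤ Real.exp d := Real.exp_le_exp.2 hd1
  have hE2 : Real.exp d ≤ (16487213/10000000:ℝ) := by
    calc Real.exp d ≤ Real.exp (1/2:ℝ) := Real.exp_le_exp.2 hd2
      _ ≤ (∑ i ∈ Finset.range 8, (1/2:ℝ) ^ i / i.factorial) + (1/2:ℝ) ^ 8 * (8 + 1) / (Nat.factorial 8 * 8) := Real.exp_bound' (by norm_num) (by norm_num) (by norm_num)
      _ ≤ (16487213/10000000:ℝ) := by norm_num [Finset.sum_range_succ, Nat.factorial]
  have hmul : Real.exp d * Real.exp (-d) = 1 := by rw [← Real.exp_add]; norm_num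
  have hF1 : (3032653/5000000:ℝ) ≤ Real.exp (-d) := by
    have h := mul_nonneg (sub_nonneg.2 hE2) (Real.exp_pos (-d)).le
    rw [sub_mul, hmul] at h
    linarith
  have hF2 : Real.exp (-d) ≤ (1516327/2500000:ℝ) := by
    have h := mul_nonneg (sub_nonneg.2 hE1) (Real.exp_pos (-d)).le
    rw [sub_mul, hmul] at h
    linarith
  have he1 : (2.7182818283:ℝ) < Real.exp 1 := Real.exp_one_gt_d9
  have he2 : Real.exp 1 < (2.7182818286:ℝ) := Real.exp_one_lt_d9
  have hrw : dickeVol 3 = ((3:ℝ)*Real.exp 1 + (-(8*(3-1):ℝ)*(Real.exp d - Real.exp (-d)) + 4*Real.sqrt (4:ℝ)*(Real.exp d + Real.exp (-d)))) / ((3:ℝ)^2*Real.exp 1) := by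
    unfold dickeVol
    push_cast
    rw [show ((3:ℝ)-2)/(2*((3:ℝ)-1)) = (1/4:ℝ) from by norm_num,
        show 2*((3:ℝ)-2)*((3:ℝ)-1) = (4:ℝ) from by norm_num,
        Real.sinh_eq, Real.cosh_eq, ← hdd]
    have hepos := (Real.exp_pos (1:ℝ)).ne'
    field_simp
    ring
  have hw : (2828427/2000000:ℝ) ≤ Real.sqrt (((3:ℕ) : ℝ) - 1) := by
    rw [show (((3:ℕ) : ℝ) - 1) = (2:ℝ) from by norm_num]
    exact (Real.le_sqrt (by norm_num) (by norm_num)).2 (by norm_num)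
  have key : dickeVol 3 > 1 / (2 * (2828427/2000000:ℝ)) := by
    rw [hrw, gt_iff_lt, lt_div_iff₀ (by positivity)]
    nlinarith [mul_nonneg (sub_nonneg.2 hs1) (sub_nonneg.2 hE1), mul_nonneg (sub_nonneg.2 hs1) (sub_nonneg.2 hF1), mul_nonneg (sub_nonneg.2 hs2) (sub_nonneg.2 hE1), mul_nonneg (sub_nonneg.2 hs2) (sub_nonneg.2 hF1), mul_nonneg (sub_nonneg.2 hs1) (sub_nonneg.2 hE2), mul_nonneg (sub_nonneg.2 hs1) (sub_nonneg.2 hF2), mul_nonneg (sub_nonneg.2 hs2) (sub_nonneg.2 hE2), mul_nonneg (sub_nonneg.2 hs2) (sub_nonneg.2 hF2)]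
  calc 1 / (2 * Real.sqrt (((3:ℕ) : ℝ) - 1)) ≤ 1 / (2 * (2828427/2000000:ℝ)) := by
        apply one_div_le_one_div_of_le (by norm_num)
        nlinarith
    _ < dickeVol 3 := key

lemma aux4 : dickeVol 4 > 1 / (2 * Real.sqrt (((4:ℕ) : ℝ) - 1)) := by
  have hd1 : (2886751/5000000:ℝ) ≤ Real.sqrt (1/3:ℝ) := (Real.le_sqrt (by norm_num) (by norm_num)).2 (by norm_num)
  have hd2 : Real.sqrt (1/3:ℝ) ≤ (5773503/10000000:ℝ) := Real.sqrt_le_iff.2 ⟨by norm_num, by norm_num⟩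
  have hs1 : (4330127/1250000:ℝ) ≤ Real.sqrt (12:ℝ) := (Real.le_sqrt (by norm_num) (by norm_num)).2 (by norm_num)
  have hs2 : Real.sqrt (12:ℝ) ≤ (34641017/10000000:ℝ) := Real.sqrt_le_iff.2 ⟨by norm_num, by norm_num⟩
  set d := Real.sqrt (1/3:ℝ) with hdd
  have hE1 : (17813117/10000000:ℝ) ≤ Real.exp d := by
    calc (17813117/10000000:ℝ) ≤ ∑ i ∈ Finset.range 8, (2886751/5000000:ℝ) ^ i / i.factorial := by
          norm_num [Finset.sum_range_succ, Nat.factorial]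
      _ ≤ Real.exp (2886751/5000000:ℝ) := Real.sum_le_exp_of_nonneg (by norm_num) 8
      _ ≤ Real.exp d := Real.exp_le_exp.2 hd1
  have hE2 : Real.exp d ≤ (17813123/10000000:ℝ) := by
    calc Real.exp d ≤ Real.exp (5773503/10000000:ℝ) := Real.exp_le_exp.2 hd2
      _ ≤ (∑ i ∈ Finset.range 8, (5773503/10000000:ℝ) ^ i / i.factorial) + (5773503/10000000:ℝ) ^ 8 * (8 + 1) / (Nat.factorial 8 * 8) := Real.exp_bound' (by norm_num) (by norm_num) (by norm_num)
      _ ≤ (17813123/10000000:ℝ) := by norm_num [Finset.sum_range_succ, Nat.factorial]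
  have hmul : Real.exp d * Real.exp (-d) = 1 := by rw [← Real.exp_add]; norm_num
  have hF1 : (2806919/5000000:ℝ) ≤ Real.exp (-d) := by nlinarith [mul_nonneg (sub_nonneg.2 hE2) (Real.exp_pos (-d)).le]
  have hF2 : Real.exp (-d) ≤ (5613841/10000000:ℝ) := by nlinarith [mul_nonneg (sub_nonneg.2 hE1) (Real.exp_pos (-d)).le]
  have he1 : (2.7182818283:ℝ) < Real.exp 1 := Real.exp_one_gt_d9
  have he2 : Real.exp 1 < (2.7182818286:ℝ) := Real.exp_one_lt_d9
  have hrw : dickeVol 4 = ((4:ℝ)*Real.exp 1 + (-(8*(4-1):ℝ)*(Real.exp d - Real.exp (-d)) + 4*Real.sqrt (12:ℝ)*(Real.exp d + Real.exp (-d)))) / ((4:ℝ)^2*Real.exp 1) := by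
    unfold dickeVol
    push_cast
    rw [show ((4:ℝ)-2)/(2*((4:ℝ)-1)) = (1/3:ℝ) from by norm_num,
        show 2*((4:ℝ)-2)*((4:ℝ)-1) = (12:ℝ) from by norm_num,
        Real.sinh_eq, Real.cosh_eq, ← hdd]
    have hepos := (Real.exp_pos (1:ℝ)).ne'
    field_simp
    ring
  have hw : (4330127/2500000:ℝ) ≤ Real.sqrt (((4:ℕ) : ℝ) - 1) := by
    rw [show (((4:ℕ) : ℝ) - 1) = (3:ℝ) from by norm_num]
    exact (Real.le_sqrt (by norm_num) (by norm_num)).2 (by norm_num)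
  have key : dickeVol 4 > 1 / (2 * (4330127/2500000:ℝ)) := by
    rw [hrw, gt_iff_lt, lt_div_iff₀ (by positivity)]
    nlinarith [mul_nonneg (sub_nonneg.2 hs1) (sub_nonneg.2 hE1), mul_nonneg (sub_nonneg.2 hs1) (sub_nonneg.2 hF1), mul_nonneg (sub_nonneg.2 hs2) (sub_nonneg.2 hE1), mul_nonneg (sub_nonneg.2 hs2) (sub_nonneg.2 hF1), mul_nonneg (sub_nonneg.2 hs1) (sub_nonneg.2 hE2), mul_nonneg (sub_nonneg.2 hs1) (sub_nonneg.2 hF2), mul_nonneg (sub_nonneg.2 hs2) (sub_nonneg.2 hE2), mul_nonneg (sub_nonneg.2 hs2) (sub_nonneg.2 hF2)]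
  calc 1 / (2 * Real.sqrt (((4:ℕ) : ℝ) - 1)) ≤ 1 / (2 * (4330127/2500000:ℝ)) := by
        apply one_div_le_one_div_of_le (by norm_num)
        nlinarith
    _ < dickeVol 4 := key

lemma aux5 : dickeVol 5 > 1 / (2 * Real.sqrt (((5:ℕ) : ℝ) - 1)) := by
  have hd1 : (1530931/2500000:ℝ) ≤ Real.sqrt (3/8:ℝ) := (Real.le_sqrt (by norm_num) (by norm_num)).2 (by norm_num)
  have hd2 : Real.sqrt (3/8:ℝ) ≤ (244949/400000:ℝ) := Real.sqrt_le_iff.2 ⟨by norm_num, by norm_num⟩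
  have hs1 : (24494897/5000000:ℝ) ≤ Real.sqrt (24:ℝ) := (Real.le_sqrt (by norm_num) (by norm_num)).2 (by norm_num)
  have hs2 : Real.sqrt (24:ℝ) ≤ (9797959/2000000:ℝ) := Real.sqrt_le_iff.2 ⟨by norm_num, by norm_num⟩
  set d := Real.sqrt (3/8:ℝ) with hdd
  have hE1 : (9224011/5000000:ℝ) ≤ Real.exp d := by
    calc (9224011/5000000:ℝ) ≤ ∑ i ∈ Finset.range 8, (1530931/2500000:ℝ) ^ i / i.factorial := by
          norm_num [Finset.sum_range_succ, Nat.factorial]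
      _ ≤ Real.exp (1530931/2500000:ℝ) := Real.sum_le_exp_of_nonneg (by norm_num) 8
      _ ≤ Real.exp d := Real.exp_le_exp.2 hd1
  have hE2 : Real.exp d ≤ (18448031/10000000:ℝ) := by
    calc Real.exp d ≤ Real.exp (244949/400000:ℝ) := Real.exp_le_exp.2 hd2
      _ ≤ (∑ i ∈ Finset.range 8, (244949/400000:ℝ) ^ i / i.factorial) + (244949/400000:ℝ) ^ 8 * (8 + 1) / (Nat.factorial 8 * 8) := Real.exp_bound' (by norm_num) (by norm_num) (by norm_num)
      _ ≤ (18448031/10000000:ℝ) := by norm_num [Finset.sum_range_succ, Nat.factorial]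
  have hmul : Real.exp d * Real.exp (-d) = 1 := by rw [← Real.exp_add]; norm_num
  have hF1 : (677579/1250000:ℝ) ≤ Real.exp (-d) := by nlinarith [mul_nonneg (sub_nonneg.2 hE2) (Real.exp_pos (-d)).le]
  have hF2 : Real.exp (-d) ≤ (1355159/2500000:ℝ) := by nlinarith [mul_nonneg (sub_nonneg.2 hE1) (Real.exp_pos (-d)).le]
  have he1 : (2.7182818283:ℝ) < Real.exp 1 := Real.exp_one_gt_d9
  have he2 : Real.exp 1 < (2.7182818286:ℝ) := Real.exp_one_lt_d9
  have hrw : dickeVol 5 = ((5:ℝ)*Real.exp 1 + (-(8*(5-1):ℝ)*(Real.exp d - Real.exp (-d)) + 4*Real.sqrt (24:ℝ)*(Real.exp d + Real.exp (-d)))) / ((5:ℝ)^2*Real.exp 1) := by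
    unfold dickeVol
    push_cast
    rw [show ((5:ℝ)-2)/(2*((5:ℝ)-1)) = (3/8:ℝ) from by norm_num,
        show 2*((5:ℝ)-2)*((5:ℝ)-1) = (24:ℝ) from by norm_num,
        Real.sinh_eq, Real.cosh_eq, ← hdd]
    have hepos := (Real.exp_pos (1:ℝ)).ne'
    field_simp
    ring
  have hw : (2/1:ℝ) ≤ Real.sqrt (((5:ℕ) : ℝ) - 1) := by
    rw [show (((5:ℕ) : ℝ) - 1) = (4:ℝ) from by norm_num]
    exact (Real.le_sqrt (by norm_num) (by norm_num)).2 (by norm_num)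
  have key : dickeVol 5 > 1 / (2 * (2/1:ℝ)) := by
    rw [hrw, gt_iff_lt, lt_div_iff₀ (by positivity)]
    nlinarith [mul_nonneg (sub_nonneg.2 hs1) (sub_nonneg.2 hE1), mul_nonneg (sub_nonneg.2 hs1) (sub_nonneg.2 hF1), mul_nonneg (sub_nonneg.2 hs2) (sub_nonneg.2 hE1), mul_nonneg (sub_nonneg.2 hs2) (sub_nonneg.2 hF1), mul_nonneg (sub_nonneg.2 hs1) (sub_nonneg.2 hE2), mul_nonneg (sub_nonneg.2 hs1) (sub_nonneg.2 hF2), mul_nonneg (sub_nonneg.2 hs2) (sub_nonneg.2 hE2), mul_nonneg (sub_nonneg.2 hs2) (sub_nonneg.2 hF2)]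
  calc 1 / (2 * Real.sqrt (((5:ℕ) : ℝ) - 1)) ≤ 1 / (2 * (2/1:ℝ)) := by
        apply one_div_le_one_div_of_le (by norm_num)
        nlinarith
    _ < dickeVol 5 := key

lemma aux6 : dickeVol 6 > 1 / (2 * Real.sqrt (((6:ℕ) : ℝ) - 1)) := by
  have hd1 : (1264911/2000000:ℝ) ≤ Real.sqrt (2/5:ℝ) := (Real.le_sqrt (by norm_num) (by norm_num)).2 (by norm_num)
  have hd2 : Real.sqrt (2/5:ℝ) ≤ (1581139/2500000:ℝ) := Real.sqrt_le_iff.2 ⟨by norm_num, by norm_num⟩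
  have hs1 : (63245553/10000000:ℝ) ≤ Real.sqrt (40:ℝ) := (Real.le_sqrt (by norm_num) (by norm_num)).2 (by norm_num)
  have hs2 : Real.sqrt (40:ℝ) ≤ (31622777/5000000:ℝ) := Real.sqrt_le_iff.2 ⟨by norm_num, by norm_num⟩
  set d := Real.sqrt (2/5:ℝ) with hdd
  have hE1 : (941113/500000:ℝ) ≤ Real.exp d := by
    calc (941113/500000:ℝ) ≤ ∑ i ∈ Finset.range 8, (1264911/2000000:ℝ) ^ i / i.factorial := by
          norm_num [Finset.sum_range_succ, Nat.factorial]
      _ ≤ Real.exp (1264911/2000000:ℝ) := Real.sum_le_exp_of_nonneg (by norm_num) 8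
      _ ≤ Real.exp d := Real.exp_le_exp.2 hd1
  have hE2 : Real.exp d ≤ (1882227/1000000:ℝ) := by
    calc Real.exp d ≤ Real.exp (1581139/2500000:ℝ) := Real.exp_le_exp.2 hd2
      _ ≤ (∑ i ∈ Finset.range 8, (1581139/2500000:ℝ) ^ i / i.factorial) + (1581139/2500000:ℝ) ^ 8 * (8 + 1) / (Nat.factorial 8 * 8) := Real.exp_bound' (by norm_num) (by norm_num) (by norm_num)
      _ ≤ (1882227/1000000:ℝ) := by norm_num [Finset.sum_range_succ, Nat.factorial]
  have hmul : Real.exp d * Real.exp (-d) = 1 := by rw [← Real.exp_add]; norm_num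
  have hF1 : (1062571/2000000:ℝ) ≤ Real.exp (-d) := by nlinarith [mul_nonneg (sub_nonneg.2 hE2) (Real.exp_pos (-d)).le]
  have hF2 : Real.exp (-d) ≤ (5312859/10000000:ℝ) := by nlinarith [mul_nonneg (sub_nonneg.2 hE1) (Real.exp_pos (-d)).le]
  have he1 : (2.7182818283:ℝ) < Real.exp 1 := Real.exp_one_gt_d9
  have he2 : Real.exp 1 < (2.7182818286:ℝ) := Real.exp_one_lt_d9
  have hrw : dickeVol 6 = ((6:ℝ)*Real.exp 1 + (-(8*(6-1):ℝ)*(Real.exp d - Real.exp (-d)) + 4*Real.sqrt (40:ℝ)*(Real.exp d + Real.exp (-d)))) / ((6:ℝ)^2*Real.exp 1) := by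
    unfold dickeVol
    push_cast
    rw [show ((6:ℝ)-2)/(2*((6:ℝ)-1)) = (2/5:ℝ) from by norm_num,
        show 2*((6:ℝ)-2)*((6:ℝ)-1) = (40:ℝ) from by norm_num,
        Real.sinh_eq, Real.cosh_eq, ← hdd]
    have hepos := (Real.exp_pos (1:ℝ)).ne'
    field_simp
    ring
  have hw : (22360679/10000000:ℝ) ≤ Real.sqrt (((6:ℕ) : ℝ) - 1) := by
    rw [show (((6:ℕ) : ℝ) - 1) = (5:ℝ) from by norm_num]
    exact (Real.le_sqrt (by norm_num) (by norm_num)).2 (by norm_num)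
  have key : dickeVol 6 > 1 / (2 * (22360679/10000000:ℝ)) := by
    rw [hrw, gt_iff_lt, lt_div_iff₀ (by positivity)]
    nlinarith [mul_nonneg (sub_nonneg.2 hs1) (sub_nonneg.2 hE1), mul_nonneg (sub_nonneg.2 hs1) (sub_nonneg.2 hF1), mul_nonneg (sub_nonneg.2 hs2) (sub_nonneg.2 hE1), mul_nonneg (sub_nonneg.2 hs2) (sub_nonneg.2 hF1), mul_nonneg (sub_nonneg.2 hs1) (sub_nonneg.2 hE2), mul_nonneg (sub_nonneg.2 hs1) (sub_nonneg.2 hF2), mul_nonneg (sub_nonneg.2 hs2) (sub_nonneg.2 hE2), mul_nonneg (sub_nonneg.2 hs2) (sub_nonneg.2 hF2)]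
  calc 1 / (2 * Real.sqrt (((6:ℕ) : ℝ) - 1)) ≤ 1 / (2 * (22360679/10000000:ℝ)) := by
        apply one_div_le_one_div_of_le (by norm_num)
        nlinarith
    _ < dickeVol 6 := key

lemma aux7 : dickeVol 7 > 1 / (2 * Real.sqrt (((7:ℕ) : ℝ) - 1)) := by
  have hd1 : (1613743/2500000:ℝ) ≤ Real.sqrt (5/12:ℝ) := (Real.le_sqrt (by norm_num) (by norm_num)).2 (by norm_num)
  have hd2 : Real.sqrt (5/12:ℝ) ≤ (6454973/10000000:ℝ) := Real.sqrt_le_iff.2 ⟨by norm_num, by norm_num⟩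
  have hs1 : (38729833/5000000:ℝ) ≤ Real.sqrt (60:ℝ) := (Real.le_sqrt (by norm_num) (by norm_num)).2 (by norm_num)
  have hs2 : Real.sqrt (60:ℝ) ≤ (77459667/10000000:ℝ) := Real.sqrt_le_iff.2 ⟨by norm_num, by norm_num⟩
  set d := Real.sqrt (5/12:ℝ) with hdd
  have hE1 : (19069341/10000000:ℝ) ≤ Real.exp d := by
    calc (19069341/10000000:ℝ) ≤ ∑ i ∈ Finset.range 8, (1613743/2500000:ℝ) ^ i / i.factorial := by
          norm_num [Finset.sum_range_succ, Nat.factorial]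
      _ ≤ Real.exp (1613743/2500000:ℝ) := Real.sum_le_exp_of_nonneg (by norm_num) 8
      _ ≤ Real.exp d := Real.exp_le_exp.2 hd1
  have hE2 : Real.exp d ≤ (2383669/1250000:ℝ) := by
    calc Real.exp d ≤ Real.exp (6454973/10000000:ℝ) := Real.exp_le_exp.2 hd2
      _ ≤ (∑ i ∈ Finset.range 8, (6454973/10000000:ℝ) ^ i / i.factorial) + (6454973/10000000:ℝ) ^ 8 * (8 + 1) / (Nat.factorial 8 * 8) := Real.exp_bound' (by norm_num) (by norm_num) (by norm_num)
      _ ≤ (2383669/1250000:ℝ) := by norm_num [Finset.sum_range_succ, Nat.factorial]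
  have hmul : Real.exp d * Real.exp (-d) = 1 := by rw [← Real.exp_add]; norm_num
  have hF1 : (327751/625000:ℝ) ≤ Real.exp (-d) := by nlinarith [mul_nonneg (sub_nonneg.2 hE2) (Real.exp_pos (-d)).le]
  have hF2 : Real.exp (-d) ≤ (262201/500000:ℝ) := by nlinarith [mul_nonneg (sub_nonneg.2 hE1) (Real.exp_pos (-d)).le]
  have he1 : (2.7182818283:ℝ) < Real.exp 1 := Real.exp_one_gt_d9
  have he2 : Real.exp 1 < (2.7182818286:ℝ) := Real.exp_one_lt_d9
  have hrw : dickeVol 7 = ((7:ℝ)*Real.exp 1 + (-(8*(7-1):ℝ)*(Real.exp d - Real.exp (-d)) + 4*Real.sqrt (60:ℝ)*(Real.exp d + Real.exp (-d)))) / ((7:ℝ)^2*Real.exp 1) := by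
    unfold dickeVol
    push_cast
    rw [show ((7:ℝ)-2)/(2*((7:ℝ)-1)) = (5/12:ℝ) from by norm_num,
        show 2*((7:ℝ)-2)*((7:ℝ)-1) = (60:ℝ) from by norm_num,
        Real.sinh_eq, Real.cosh_eq, ← hdd]
    have hepos := (Real.exp_pos (1:ℝ)).ne'
    field_simp
    ring
  have hw : (24494897/10000000:ℝ) ≤ Real.sqrt (((7:ℕ) : ℝ) - 1) := by
    rw [show (((7:ℕ) : ℝ) - 1) = (6:ℝ) from by norm_num]
    exact (Real.le_sqrt (by norm_num) (by norm_num)).2 (by norm_num)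
  have key : dickeVol 7 > 1 / (2 * (24494897/10000000:ℝ)) := by
    rw [hrw, gt_iff_lt, lt_div_iff₀ (by positivity)]
    nlinarith [mul_nonneg (sub_nonneg.2 hs1) (sub_nonneg.2 hE1), mul_nonneg (sub_nonneg.2 hs1) (sub_nonneg.2 hF1), mul_nonneg (sub_nonneg.2 hs2) (sub_nonneg.2 hE1), mul_nonneg (sub_nonneg.2 hs2) (sub_nonneg.2 hF1), mul_nonneg (sub_nonneg.2 hs1) (sub_nonneg.2 hE2), mul_nonneg (sub_nonneg.2 hs1) (sub_nonneg.2 hF2), mul_nonneg (sub_nonneg.2 hs2) (sub_nonneg.2 hE2), mul_nonneg (sub_nonneg.2 hs2) (sub_nonneg.2 hF2)]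
  calc 1 / (2 * Real.sqrt (((7:ℕ) : ℝ) - 1)) ≤ 1 / (2 * (24494897/10000000:ℝ)) := by
        apply one_div_le_one_div_of_le (by norm_num)
        nlinarith
    _ < dickeVol 7 := key

lemma aux8 : dickeVol 8 ≤ 1 / (2 * Real.sqrt ((8:ℝ) - 1)) := by
  have hd1 : (818317/1250000:ℝ) ≤ Real.sqrt (3/7:ℝ) := (Real.le_sqrt (by norm_num) (by norm_num)).2 (by norm_num)
  have hd2 : Real.sqrt (3/7:ℝ) ≤ (6546537/10000000:ℝ) := Real.sqrt_le_iff.2 ⟨by norm_num, by norm_num⟩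
  have hs1 : (91651513/10000000:ℝ) ≤ Real.sqrt (84:ℝ) := (Real.le_sqrt (by norm_num) (by norm_num)).2 (by norm_num)
  have hs2 : Real.sqrt (84:ℝ) ≤ (45825757/5000000:ℝ) := Real.sqrt_le_iff.2 ⟨by norm_num, by norm_num⟩
  set d := Real.sqrt (3/7:ℝ) with hdd
  have hE1 : (4811187/2500000:ℝ) ≤ Real.exp d := by
    calc (4811187/2500000:ℝ) ≤ ∑ i ∈ Finset.range 8, (818317/1250000:ℝ) ^ i / i.factorial := by
          norm_num [Finset.sum_range_succ, Nat.factorial]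
      _ ≤ Real.exp (818317/1250000:ℝ) := Real.sum_le_exp_of_nonneg (by norm_num) 8
      _ ≤ Real.exp d := Real.exp_le_exp.2 hd1
  have hE2 : Real.exp d ≤ (481119/250000:ℝ) := by
    calc Real.exp d ≤ Real.exp (6546537/10000000:ℝ) := Real.exp_le_exp.2 hd2
      _ ≤ (∑ i ∈ Finset.range 8, (6546537/10000000:ℝ) ^ i / i.factorial) + (6546537/10000000:ℝ) ^ 8 * (8 + 1) / (Nat.factorial 8 * 8) := Real.exp_bound' (by norm_num) (by norm_num) (by norm_num)
      _ ≤ (481119/250000:ℝ) := by norm_num [Finset.sum_range_succ, Nat.factorial]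
  have hmul : Real.exp d * Real.exp (-d) = 1 := by rw [← Real.exp_add]; norm_num
  have hF1 : (5196219/10000000:ℝ) ≤ Real.exp (-d) := by nlinarith [mul_nonneg (sub_nonneg.2 hE2) (Real.exp_pos (-d)).le]
  have hF2 : Real.exp (-d) ≤ (5196223/10000000:ℝ) := by nlinarith [mul_nonneg (sub_nonneg.2 hE1) (Real.exp_pos (-d)).le]
  have he1 : (2.7182818283:ℝ) < Real.exp 1 := Real.exp_one_gt_d9
  have he2 : Real.exp 1 < (2.7182818286:ℝ) := Real.exp_one_lt_d9
  have hrw : dickeVol 8 = ((8:ℝ)*Real.exp 1 + (-(8*(8-1):ℝ)*(Real.exp d - Real.exp (-d)) + 4*Real.sqrt (84:ℝ)*(Real.exp d + Real.exp (-d)))) / ((8:ℝ)^2*Real.exp 1) := by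
    unfold dickeVol
    push_cast
    rw [show ((8:ℝ)-2)/(2*((8:ℝ)-1)) = (3/7:ℝ) from by norm_num,
        show 2*((8:ℝ)-2)*((8:ℝ)-1) = (84:ℝ) from by norm_num,
        Real.sinh_eq, Real.cosh_eq, ← hdd]
    have hepos := (Real.exp_pos (1:ℝ)).ne'
    field_simp
    ring
  have hw : Real.sqrt ((8:ℝ) - 1) ≤ (13228757/5000000:ℝ) := by
    rw [show ((8:ℝ) - 1) = (7:ℝ) from by norm_num]
    exact Real.sqrt_le_iff.2 ⟨by norm_num, by norm_num⟩
  have hw0 : (0:ℝ) < Real.sqrt ((8:ℝ) - 1) := by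
    rw [show ((8:ℝ) - 1) = (7:ℝ) from by norm_num]
    exact Real.sqrt_pos.2 (by norm_num)
  have key : dickeVol 8 ≤ 1 / (2 * (13228757/5000000:ℝ)) := by
    rw [hrw, div_le_iff₀ (by positivity)]
    nlinarith [mul_nonneg (sub_nonneg.2 hs1) (sub_nonneg.2 hE1), mul_nonneg (sub_nonneg.2 hs1) (sub_nonneg.2 hF1), mul_nonneg (sub_nonneg.2 hs2) (sub_nonneg.2 hE1), mul_nonneg (sub_nonneg.2 hs2) (sub_nonneg.2 hF1), mul_nonneg (sub_nonneg.2 hs1) (sub_nonneg.2 hE2), mul_nonneg (sub_nonneg.2 hs1) (sub_nonneg.2 hF2), mul_nonneg (sub_nonneg.2 hs2) (sub_nonneg.2 hE2), mul_nonneg (sub_nonneg.2 hs2) (sub_nonneg.2 hF2)]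
  calc dickeVol 8 ≤ 1 / (2 * (13228757/5000000:ℝ)) := key
    _ ≤ 1 / (2 * Real.sqrt ((8:ℝ) - 1)) := by
        apply one_div_le_one_div_of_le (by positivity)
        nlinarith

/-- **GME detection window for two-excitation Dicke states.** The criterion
`V_{2D}(|D₂^M⟩) > 1/(2√(M−1))` holds for all `3 ≤ M ≤ 7`, and fails for `M = 8`. -/
theorem stmt10 :
    (∀ M : ℕ, 3 ≤ M → M ≤ 7 → dickeVol M > 1 / (2 * Real.sqrt ((M : ℝ) - 1))) ∧
      ¬ (dickeVol 8 > 1 / (2 * Real.sqrt ((8 : ℝ) - 1))) := by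
  constructor
  · intro M h1 h2
    interval_cases M
    · exact aux3
    · exact aux4
    · exact aux5
    · exact aux6
    · exact aux7
  · exact not_lt.2 aux8
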